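/- In a tree with a nonempty set I of marked nodes, if two distinct vertices both achieve the minimum infection eccentricity, then they are adjacent. -/

import Mathlib

/-- Splitting a geodesic at an interior point gives two geodesics. -/
lemma dist_split {V : Type*} [DecidableEq V] {G : SimpleGraph V} (hc : G.Connected)
    {a b x : V} (p : G.Walk a b) (hp : p.length = G.dist a b)
    (hx : x ∈ p.support) : G.dist a x + G.dist x b = G.dist a b := by
  have hspec := p.take_spec hx
  have hlen : (p.takeUntil x hx).length + (p.dropUntil x hx).length = p.length := by
    rw [← SimpleGraph.Walk.length_append, hspec]
  have h1 : G.dist a x ≤ (p.takeUntil x hx).length := SimpleGraph.dist_le _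
  have h2 : G.dist x b ≤ (p.dropUntil x hx).length := SimpleGraph.dist_le _
  have h3 : G.dist a b ≤ G.dist a x + G.dist x b := hc.dist_triangle
  omega

/-- In a tree, any path realizes the distance. -/
lemma tree_path_length {V : Type*} {G : SimpleGraph V} (hG : G.IsTree)
    {a b : V} (p : G.Walk a b) (hp : p.IsPath) : p.length = G.dist a b := by
  obtain ⟨q, hq, hql⟩ := hG.isConnected.exists_path_of_dist a b
  have := (hG.existsUnique_path a b).unique hp hq
  rw [this, hql]

/-- In a finite tree with a nonempty set `I` of infected nodes, two distinct vertices
both achieving the minimum infection eccentricity must be adjacent. -/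
theorem stmt_1 {V : Type*} [Fintype V] [DecidableEq V] [Nonempty V]
    (G : SimpleGraph V) (hG : G.IsTree)
    (I : Finset V) (hI : I.Nonempty)
    (e : V → ℕ) (he : ∀ v, e v = I.sup' hI (fun u => G.dist v u))
    (u w : V) (huw : u ≠ w)
    (hu : e u = Finset.univ.inf' Finset.univ_nonempty e)
    (hw : e w = Finset.univ.inf' Finset.univ_nonempty e) :
    G.Adj u w := by
  by_contra hadj
  set m := Finset.univ.inf' Finset.univ_nonempty e with hm
  have hc := hG.isConnected
  -- the geodesic from u to w
  obtain ⟨p, hp, hpl⟩ := hc.exists_path_of_dist u w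
  have hd2 : 2 ≤ G.dist u w := by
    have h0 : G.dist u w ≠ 0 := by
      simp [SimpleGraph.dist_ne_zero_iff_ne_and_reachable, huw, hc.preconnected u w]
    have h1 : G.dist u w ≠ 1 := fun h => hadj (SimpleGraph.dist_eq_one_iff_adj.mp h)
    omega
  -- decompose p as cons
  cases p with
  | nil => simp at hpl; exact huw rfl
  | cons h q =>
    rename_i x
    rw [SimpleGraph.Walk.cons_isPath_iff] at hp
    have hq : q.IsPath := hp.1
    have hql : q.length = G.dist x w := tree_path_length hG q hq
    have hxw : G.dist x w = G.dist u w - 1 := by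
      simp [SimpleGraph.Walk.length_cons] at hpl
      omega
    have hux : G.dist u x = 1 := SimpleGraph.dist_eq_one_iff_adj.mpr h
    -- e x ≥ m
    have hmx : m ≤ e x := Finset.inf'_le _ (Finset.mem_univ x)
    -- pick farthest infected node from x
    obtain ⟨t, htI, hts⟩ := Finset.exists_mem_eq_sup' hI (fun u => G.dist x u)
    have hex : e x = G.dist x t := by rw [he x]; exact hts
    -- bounds from u and w
    have htu : G.dist u t ≤ m := by
      rw [← hu, he u]; exact Finset.le_sup' _ htI
    have htw : G.dist w t ≤ m := by
      rw [← hw, he w]; exact Finset.le_sup' _ htI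
    -- geodesics from t to u and t to w
    obtain ⟨pu, hpu, hpul⟩ := hc.exists_path_of_dist t u
    obtain ⟨pw, hpw, hpwl⟩ := hc.exists_path_of_dist t w
    -- the concatenated walk from u to w contains the unique path
    set r : G.Walk u w := pu.reverse.append pw with hr
    have hrb : r.bypass.IsPath := r.bypass_isPath
    have hpeq : r.bypass = SimpleGraph.Walk.cons h q :=
      (hG.existsUnique_path u w).unique hrb ((SimpleGraph.Walk.cons_isPath_iff h q).mpr hp)
    have hxr : x ∈ r.support := by
      apply r.support_bypass_subset
      rw [hpeq]
      simp [SimpleGraph.Walk.support_cons]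
    rw [hr, SimpleGraph.Walk.mem_support_append_iff, SimpleGraph.Walk.support_reverse,
      List.mem_reverse] at hxr
    have hc1 : G.dist t u = G.dist u t := SimpleGraph.dist_comm
    have hc2 : G.dist t w = G.dist w t := SimpleGraph.dist_comm
    have key : G.dist t x + 1 ≤ m := by
      cases hxr with
      | inl hx =>
        have := dist_split hc pu hpul hx
        have hxu : G.dist x u = 1 := by rw [SimpleGraph.dist_comm]; exact hux
        omega
      | inr hx =>
        have := dist_split hc pw hpwl hx
        have : G.dist t x + G.dist x w = G.dist t w := this
        omega
    rw [SimpleGraph.dist_comm] at hex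
    omega
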